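/- Let G be a group generated by a family X = (x_1, …, x_n). (a) For every u ∈ G and all palindromes p, q, the commutator [u, pq] = u^{-1} (pq)^{-1} u (pq) is a product of 4 palindromes. (b) For every u ∈ G, every palindrome p, every generator x = x_i, and all integers α, β, the element [u, p x^α] x^β is a product of 4 palindromes. -/

import Mathlib

/-- The element of `G` represented by a word in the alphabet `X^{±1}`:
a letter `(i, true)` stands for `X i` and `(i, false)` for `(X i)⁻¹`. -/
def evalWord {G : Type*} {n : ℕ} [Group G] (X : Fin n → G) (w : List (Fin n × Bool)) : G :=
  (w.map fun l => if l.2 then X l.1 else (X l.1)⁻¹).prod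

/-- `g` is a palindrome with respect to the generating family `X` if it is represented by
some word whose sequence of letters equals its reverse. -/
def IsPalindrome {G : Type*} {n : ℕ} [Group G] (X : Fin n → G) (g : G) : Prop :=
  ∃ w : List (Fin n × Bool), w.reverse = w ∧ evalWord X w = g

/-- `g` is a product of `k` palindromes with respect to `X`. -/
def IsPalProd {G : Type*} {n : ℕ} [Group G] (X : Fin n → G) (k : ℕ) (g : G) : Prop :=
  ∃ f : Fin k → G, (∀ i, IsPalindrome X (f i)) ∧ (List.ofFn f).prod = g

/-- The palindromic length of `g` with respect to `X`, valued in `ℕ∞`. -/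
noncomputable def palLength {G : Type*} {n : ℕ} [Group G] (X : Fin n → G) (g : G) : ℕ∞ :=
  sInf {k : ℕ∞ | ∃ m : ℕ, k = (m : ℕ∞) ∧ IsPalProd X m g}

/-- The palindromic width of `G` with respect to `X`, valued in `ℕ∞`. -/
noncomputable def palWidth {G : Type*} {n : ℕ} [Group G] (X : Fin n → G) : ℕ∞ :=
  ⨆ g : G, palLength X g

/-- The commutator convention of the paper: `[a, b] = a⁻¹ b⁻¹ a b`. -/
def pcomm {G : Type*} [Group G] (a b : G) : G := a⁻¹ * b⁻¹ * a * b


namespace PalAux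

variable {G : Type*} {n : ℕ} [Group G] (X : Fin n → G)

def invL {n : ℕ} (l : Fin n × Bool) : Fin n × Bool := (l.1, !l.2)

lemma evalWord_append (w₁ w₂ : List (Fin n × Bool)) :
    evalWord X (w₁ ++ w₂) = evalWord X w₁ * evalWord X w₂ := by
  simp [evalWord]

lemma evalWord_inv (w : List (Fin n × Bool)) :
    (evalWord X w)⁻¹ = evalWord X ((w.map invL).reverse) := by
  induction w with
  | nil => simp [evalWord]
  | cons a t ih =>
    have h : ((a :: t).map invL).reverse = (t.map invL).reverse ++ [invL a] := by simp
    rw [h, evalWord_append, ← ih]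
    have h2 : evalWord X (a :: t) = (if a.2 then X a.1 else (X a.1)⁻¹) * evalWord X t := by
      simp [evalWord]
    rw [h2, mul_inv_rev]
    congr 1
    cases a with
    | mk i b => cases b <;> simp [evalWord, invL]

lemma pal_inv {p : G} (hp : IsPalindrome X p) : IsPalindrome X p⁻¹ := by
  obtain ⟨w, hrev, heval⟩ := hp
  refine ⟨(w.map invL).reverse, ?_, by rw [← evalWord_inv, heval]⟩
  rw [List.reverse_reverse, ← List.map_reverse, hrev]

lemma pal_zpow (i : Fin n) (α : ℤ) : IsPalindrome X (X i ^ α) := by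
  cases α with
  | ofNat m =>
      refine ⟨List.replicate m (i, true), List.reverse_replicate, ?_⟩
      simp [evalWord, List.map_replicate]
  | negSucc m =>
      refine ⟨List.replicate (m + 1) (i, false), List.reverse_replicate, ?_⟩
      simp [evalWord, List.map_replicate, zpow_negSucc, inv_pow]

lemma pal_conj (w : List (Fin n × Bool)) {p : G} (hp : IsPalindrome X p) :
    IsPalindrome X (evalWord X w * p * evalWord X w.reverse) := by
  obtain ⟨v, hv, hve⟩ := hp
  refine ⟨w ++ v ++ w.reverse, ?_, ?_⟩
  · simp [List.reverse_append, hv, List.append_assoc]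
  · simp [evalWord_append, hve, mul_assoc]

lemma exists_word (hX : Subgroup.closure (Set.range X) = ⊤) (g : G) :
    ∃ w : List (Fin n × Bool), evalWord X w = g := by
  have hg : g ∈ Subgroup.closure (Set.range X) := hX ▸ Subgroup.mem_top g
  induction hg using Subgroup.closure_induction with
  | mem x hx =>
      obtain ⟨i, rfl⟩ := hx
      exact ⟨[(i, true)], by simp [evalWord]⟩
  | one => exact ⟨[], rfl⟩
  | mul x y _ _ hx hy =>
      obtain ⟨w₁, h₁⟩ := hx
      obtain ⟨w₂, h₂⟩ := hy
      exact ⟨w₁ ++ w₂, by rw [evalWord_append, h₁, h₂]⟩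
  | inv x _ hx =>
      obtain ⟨w, h⟩ := hx
      exact ⟨(w.map invL).reverse, by rw [← evalWord_inv, h]⟩

/-- For every `u` there is `ρ` such that `ρ * p * u` is a palindrome whenever `p` is. -/
lemma exists_rho (hX : Subgroup.closure (Set.range X) = ⊤) (u : G) :
    ∃ ρ : G, ∀ p : G, IsPalindrome X p → IsPalindrome X (ρ * p * u) := by
  obtain ⟨w, hw⟩ := exists_word X hX u
  refine ⟨evalWord X w.reverse, fun p hp => ?_⟩
  have h := pal_conj X w.reverse hp
  rwa [List.reverse_reverse, hw] at h

lemma prod_four (a b c d : G) : (List.ofFn ![a, b, c, d]).prod = a * b * c * d := by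
  simp [List.ofFn_succ, mul_assoc]

end PalAux

/-- (a) For every `u` and all palindromes `p, q`, the commutator `[u, pq]` is a product of
4 palindromes; (b) every element `[u, p x^α] x^β` with `p` a palindrome and `x` a generator
is a product of 4 palindromes. -/
theorem isPalProd_four {G : Type*} [Group G] {n : ℕ} (X : Fin n → G)
    (hX : Subgroup.closure (Set.range X) = ⊤) :
    (∀ u p q : G, IsPalindrome X p → IsPalindrome X q → IsPalProd X 4 (pcomm u (p * q))) ∧
      (∀ (u p : G) (i : Fin n) (α β : ℤ), IsPalindrome X p →
        IsPalProd X 4 (pcomm u (p * X i ^ α) * X i ^ β)) := by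
  constructor
  · intro u p q hp hq
    obtain ⟨ρ, hρ⟩ := PalAux.exists_rho X hX u
    refine ⟨![(ρ * q * u)⁻¹, ρ * p⁻¹ * u, p, q], ?_, ?_⟩
    · intro j
      fin_cases j
      · exact PalAux.pal_inv X (hρ q hq)
      · exact hρ p⁻¹ (PalAux.pal_inv X hp)
      · exact hp
      · exact hq
    · rw [PalAux.prod_four]
      simp only [pcomm, mul_inv_rev]
      group
  · intro u p i α β hp
    obtain ⟨ρ, hρ⟩ := PalAux.exists_rho X hX u
    refine ⟨![(ρ * X i ^ α * u)⁻¹, ρ * p⁻¹ * u, p, X i ^ (α + β)], ?_, ?_⟩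
    · intro j
      fin_cases j
      · exact PalAux.pal_inv X (hρ _ (PalAux.pal_zpow X i α))
      · exact hρ p⁻¹ (PalAux.pal_inv X hp)
      · exact hp
      · exact PalAux.pal_zpow X i _
    · rw [PalAux.prod_four]
      simp only [pcomm, mul_inv_rev, zpow_add]
      group
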